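/- The category of pastures has all limits of diagrams indexed by a small category: for every small category J and every functor F from J to the category of pastures, a limit of F exists. -/
import Mathlib


universe u v w

/-- A pasture structure on a type `P`: a multiplication, a zero, a one,
an involution `neg`, and a ternary nullset relation `null a b c`
(meaning "`a + b + c = 0`"). -/
structure PastureStr (P : Type u) where
  mul : P → P → P
  zero : P
  one : P
  neg : P → P
  null : P → P → P → Prop

/-- `P` together with a `PastureStr` is a pasture: `P` is a commutative
monoid with zero whose nonzero elements form an abelian group, `neg` is an
involution fixing `0`, and the nullset is invariant under permutations,
invariant under multiplication, and satisfies `a + b + 0 = 0 ↔ a = -b`. -/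
structure PastureStr.IsPasture {P : Type u} (S : PastureStr P) : Prop where
  mul_comm : ∀ a b : P, S.mul a b = S.mul b a
  mul_assoc : ∀ a b c : P, S.mul (S.mul a b) c = S.mul a (S.mul b c)
  one_mul : ∀ a : P, S.mul S.one a = a
  zero_mul : ∀ a : P, S.mul S.zero a = S.zero
  one_ne_zero : S.one ≠ S.zero
  mul_ne_zero : ∀ a b : P, a ≠ S.zero → b ≠ S.zero → S.mul a b ≠ S.zero
  exists_inv : ∀ a : P, a ≠ S.zero → ∃ b : P, S.mul a b = S.one
  neg_neg : ∀ a : P, S.neg (S.neg a) = a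
  neg_zero : S.neg S.zero = S.zero
  null_swap_left : ∀ a b c : P, S.null a b c → S.null b a c
  null_swap_right : ∀ a b c : P, S.null a b c → S.null a c b
  null_mul : ∀ d a b c : P, S.null a b c → S.null (S.mul d a) (S.mul d b) (S.mul d c)
  null_zero : ∀ a b : P, S.null a b S.zero ↔ a = S.neg b

/-- A morphism of pastures: a multiplicative map preserving `0`, `1`,
the involution and the nullset. -/
structure PastureStr.IsHom {P : Type u} {P' : Type v} (S : PastureStr P) (T : PastureStr P')
    (f : P → P') : Prop where
  map_mul : ∀ a b : P, f (S.mul a b) = T.mul (f a) (f b)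
  map_zero : f S.zero = T.zero
  map_one : f S.one = T.one
  map_neg : ∀ a : P, f (S.neg a) = T.neg (f a)
  map_null : ∀ a b c : P, S.null a b c → T.null (f a) (f b) (f c)

/-- A bundled pasture: a carrier with a pasture structure satisfying the axioms. -/
structure Pasture : Type (u + 1) where
  carrier : Type u
  str : PastureStr carrier
  isPasture : str.IsPasture

/-- A morphism between bundled pastures. -/
structure PastureHom (A B : Pasture.{u}) : Type u where
  toFun : A.carrier → B.carrier
  isHom : PastureStr.IsHom A.str B.str toFun

theorem PastureHom.ext' {A B : Pasture.{u}} {f g : PastureHom A B}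
    (h : f.toFun = g.toFun) : f = g := by
  cases f; cases g; cases h; rfl

theorem PastureStr.IsHom.id' {P : Type u} (S : PastureStr P) :
    S.IsHom S (fun x => x) :=
  ⟨fun _ _ => rfl, rfl, rfl, fun _ => rfl, fun _ _ _ h => h⟩

theorem PastureStr.IsHom.comp' {P : Type u} {Q : Type v} {R : Type w}
    {S : PastureStr P} {T : PastureStr Q} {U : PastureStr R}
    {f : P → Q} {g : Q → R} (hf : S.IsHom T f) (hg : T.IsHom U g) :
    S.IsHom U (fun x => g (f x)) where
  map_mul a b := by
    show g (f (S.mul a b)) = U.mul (g (f a)) (g (f b))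
    rw [hf.map_mul, hg.map_mul]
  map_zero := by
    show g (f S.zero) = U.zero
    rw [hf.map_zero, hg.map_zero]
  map_one := by
    show g (f S.one) = U.one
    rw [hf.map_one, hg.map_one]
  map_neg a := by
    show g (f (S.neg a)) = U.neg (g (f a))
    rw [hf.map_neg, hg.map_neg]
  map_null a b c h := hg.map_null _ _ _ (hf.map_null _ _ _ h)

/-- The category of pastures, with morphisms of pastures as morphisms and
composition of functions as composition. -/
instance : CategoryTheory.Category Pasture.{u} where
  Hom A B := PastureHom A B
  id A := ⟨fun x => x, PastureStr.IsHom.id' A.str⟩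
  comp f g := ⟨fun x => g.toFun (f.toFun x), f.isHom.comp' g.isHom⟩
  id_comp _ := PastureHom.ext' rfl
  comp_id _ := PastureHom.ext' rfl
  assoc _ _ _ := PastureHom.ext' rfl

namespace PastureLimits

open CategoryTheory

section Basic

variable {P : Type*} {S : PastureStr P}

theorem mul_zero' (hp : S.IsPasture) (a : P) : S.mul a S.zero = S.zero := by
  rw [hp.mul_comm, hp.zero_mul]

theorem mul_eq_zero_iff (hp : S.IsPasture) (a b : P) :
    S.mul a b = S.zero ↔ a = S.zero ∨ b = S.zero := by
  constructor
  · intro h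
    by_contra hc
    push_neg at hc
    exact hp.mul_ne_zero a b hc.1 hc.2 h
  · rintro (rfl | rfl)
    · exact hp.zero_mul b
    · exact mul_zero' hp a

theorem neg_eq_zero_iff (hp : S.IsPasture) (a : P) :
    S.neg a = S.zero ↔ a = S.zero := by
  constructor
  · intro h
    have h2 := congrArg S.neg h
    rwa [hp.neg_neg, hp.neg_zero] at h2
  · rintro rfl; exact hp.neg_zero

theorem inv_unique (hp : S.IsPasture) {a b c : P}
    (hb : S.mul a b = S.one) (hc : S.mul a c = S.one) : b = c := by
  calc b = S.mul (S.mul a c) b := by rw [hc, hp.one_mul]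
  _ = S.mul c (S.mul a b) := by
      rw [hp.mul_comm a c, hp.mul_assoc]
  _ = c := by rw [hb, hp.mul_comm, hp.one_mul]

theorem null_two_zero (hp : S.IsPasture) {a b c : P}
    (h : S.null a b c) (hb : b = S.zero) (hc : c = S.zero) : a = S.zero := by
  subst hb; subst hc
  have := (hp.null_zero a S.zero).1 h
  rwa [hp.neg_zero] at this

theorem hom_zero_iff {Q : Type*} {T : PastureStr Q} (hp : S.IsPasture) (hq : T.IsPasture)
    {f : P → Q} (hf : S.IsHom T f) (a : P) : f a = T.zero ↔ a = S.zero := by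
  constructor
  · intro h
    by_contra ha
    obtain ⟨b, hb⟩ := hp.exists_inv a ha
    have : T.one = T.zero := by
      rw [← hf.map_one, ← hb, hf.map_mul, h, hq.zero_mul]
    exact hq.one_ne_zero this
  · rintro rfl; exact hf.map_zero

end Basic

/-- The null relation of the Krasner hyperfield on `Bool`: not exactly one nonzero. -/
def nullK (a b c : Bool) : Prop :=
  (a || b || c) = false ∨ ((a && b) || (a && c) || (b && c)) = true

instance (a b c : Bool) : Decidable (nullK a b c) := by
  unfold nullK; exact inferInstance

theorem nullK_swap_left : ∀ a b c : Bool, nullK a b c → nullK b a c := by decide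
theorem nullK_swap_right : ∀ a b c : Bool, nullK a b c → nullK a c b := by decide
theorem nullK_mul : ∀ d a b c : Bool, nullK a b c → nullK (d && a) (d && b) (d && c) := by decide
theorem nullK_zero : ∀ a b : Bool, nullK a b false ↔ a = b := by decide

section Lim

variable {J : Type v} [SmallCategory J] (F : CategoryTheory.Functor J Pasture.{max u v})

/-- Carrier of the limit: a Bool flag together with a compatible section which is
everywhere zero iff the flag is `false`. -/
def Sec : Type max u v :=
  {p : Bool × ∀ j, (F.obj j).carrier //
    (∀ {j j'} (f : j ⟶ j'), (F.map f).toFun (p.2 j) = p.2 j') ∧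
    ∀ j, (p.2 j = (F.obj j).str.zero ↔ p.1 = false)}

def limStr : PastureStr (Sec F) where
  mul p q := ⟨(p.1.1 && q.1.1, fun j => (F.obj j).str.mul (p.1.2 j) (q.1.2 j)),
    fun {j j'} f => by rw [(F.map f).isHom.map_mul, p.2.1 f, q.2.1 f],
    fun j => by
      rw [mul_eq_zero_iff (F.obj j).isPasture, p.2.2 j, q.2.2 j]
      cases p.1.1 <;> cases q.1.1 <;> simp⟩
  zero := ⟨(false, fun j => (F.obj j).str.zero),
    fun {_ _} f => (F.map f).isHom.map_zero,
    fun j => by simp⟩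
  one := ⟨(true, fun j => (F.obj j).str.one),
    fun {_ _} f => (F.map f).isHom.map_one,
    fun j => by simp [(F.obj j).isPasture.one_ne_zero]⟩
  neg p := ⟨(p.1.1, fun j => (F.obj j).str.neg (p.1.2 j)),
    fun {j j'} f => by rw [(F.map f).isHom.map_neg, p.2.1 f],
    fun j => by rw [neg_eq_zero_iff (F.obj j).isPasture]; exact p.2.2 j⟩
  null p q r := nullK p.1.1 q.1.1 r.1.1 ∧
    ∀ j, (F.obj j).str.null (p.1.2 j) (q.1.2 j) (r.1.2 j)

theorem Sec.ext {p q : Sec F} (h1 : p.1.1 = q.1.1) (h2 : ∀ j, p.1.2 j = q.1.2 j) :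
    p = q := by
  apply Subtype.ext
  exact Prod.ext h1 (funext h2)

theorem eq_zero_iff (p : Sec F) : p = (limStr F).zero ↔ p.1.1 = false := by
  constructor
  · rintro rfl; rfl
  · intro h
    exact Sec.ext F h (fun j => (p.2.2 j).2 h)

theorem limIsPasture : (limStr F).IsPasture where
  mul_comm p q := Sec.ext F (Bool.and_comm _ _)
    (fun j => (F.obj j).isPasture.mul_comm _ _)
  mul_assoc p q r := Sec.ext F (Bool.and_assoc _ _ _)
    (fun j => (F.obj j).isPasture.mul_assoc _ _ _)
  one_mul p := Sec.ext F (Bool.true_and p.1.1) (fun j => (F.obj j).isPasture.one_mul _)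
  zero_mul p := Sec.ext F (Bool.false_and p.1.1) (fun j => (F.obj j).isPasture.zero_mul _)
  one_ne_zero h := by
    have h2 : true = false := congrArg (fun p : Sec F => p.1.1) h
    exact Bool.noConfusion h2
  mul_ne_zero p q hp hq h := by
    rw [Ne, eq_zero_iff] at hp hq
    have h' : (p.1.1 && q.1.1) = false := (eq_zero_iff F _).1 h
    rw [Bool.and_eq_false_iff] at h'
    tauto
  exists_inv p hp := by
    rw [Ne, eq_zero_iff] at hp
    have hpt : p.1.1 = true := by cases h : p.1.1 <;> simp_all
    have hne : ∀ j, p.1.2 j ≠ (F.obj j).str.zero := fun j h => by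
      rw [(p.2.2 j).1 h] at hpt; simp at hpt
    choose inv hinv using fun j => (F.obj j).isPasture.exists_inv _ (hne j)
    have hinvne : ∀ j, inv j ≠ (F.obj j).str.zero := fun j h => by
      have := hinv j
      rw [h, mul_zero' (F.obj j).isPasture] at this
      exact (F.obj j).isPasture.one_ne_zero this.symm
    refine ⟨⟨(true, inv), fun {j j'} f => ?_, fun j => by
      simp [hinvne j]⟩, ?_⟩
    · -- compatibility of the inverse section
      refine inv_unique (F.obj j').isPasture (a := p.1.2 j') ?_ (hinv j')
      rw [← p.2.1 f, ← (F.map f).isHom.map_mul, hinv j, (F.map f).isHom.map_one]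
    · exact Sec.ext F (show (p.1.1 && true) = true by simp [hpt]) (fun j => hinv j)
  neg_neg p := Sec.ext F rfl (fun j => (F.obj j).isPasture.neg_neg _)
  neg_zero := Sec.ext F rfl (fun j => (F.obj j).isPasture.neg_zero)
  null_swap_left p q r h := ⟨nullK_swap_left _ _ _ h.1,
    fun j => (F.obj j).isPasture.null_swap_left _ _ _ (h.2 j)⟩
  null_swap_right p q r h := ⟨nullK_swap_right _ _ _ h.1,
    fun j => (F.obj j).isPasture.null_swap_right _ _ _ (h.2 j)⟩
  null_mul d p q r h := ⟨nullK_mul _ _ _ _ h.1,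
    fun j => (F.obj j).isPasture.null_mul _ _ _ _ (h.2 j)⟩
  null_zero p q := by
    constructor
    · rintro ⟨h1, h2⟩
      refine Sec.ext F ((nullK_zero _ _).1 h1) (fun j => ?_)
      exact ((F.obj j).isPasture.null_zero _ _).1 (h2 j)
    · intro h
      subst h
      exact ⟨(nullK_zero _ _).2 rfl,
        fun j => ((F.obj j).isPasture.null_zero _ _).2 rfl⟩

/-- The limit pasture. -/
def limPasture : Pasture.{max u v} := ⟨Sec F, limStr F, limIsPasture F⟩

/-- Projections. -/
def proj (j : J) : limPasture F ⟶ F.obj j where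
  toFun p := p.1.2 j
  isHom := ⟨fun _ _ => rfl, rfl, rfl, fun _ => rfl, fun _ _ _ h => h.2 j⟩

def limCone : Limits.Cone F where
  pt := limPasture F
  π := { app := proj F
         naturality := fun _ _ f => PastureHom.ext' (funext fun p => (p.2.1 f).symm) }

open Classical in
noncomputable def kOf (c : Limits.Cone F) (x : c.pt.carrier) : Bool :=
  if x = c.pt.str.zero then false else true

theorem kOf_eq_false_iff (c : Limits.Cone F) (x : c.pt.carrier) :
    kOf F c x = false ↔ x = c.pt.str.zero := by
  unfold kOf; split <;> simp_all

theorem app_zero_iff (c : Limits.Cone F) (j : J) (x : c.pt.carrier) :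
    (c.π.app j).toFun x = (F.obj j).str.zero ↔ x = c.pt.str.zero :=
  hom_zero_iff c.pt.isPasture (F.obj j).isPasture (c.π.app j).isHom x

theorem kOf_mul (c : Limits.Cone F) (x y : c.pt.carrier) :
    kOf F c (c.pt.str.mul x y) = (kOf F c x && kOf F c y) := by
  have h := mul_eq_zero_iff c.pt.isPasture x y
  unfold kOf
  by_cases hx : x = c.pt.str.zero <;> by_cases hy : y = c.pt.str.zero
  · rw [if_pos (h.2 (Or.inl hx)), if_pos hx, if_pos hy]; rfl
  · rw [if_pos (h.2 (Or.inl hx)), if_pos hx]; rfl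
  · rw [if_pos (h.2 (Or.inr hy)), if_neg hx, if_pos hy]; rfl
  · rw [if_neg (fun hm => (h.1 hm).elim hx hy), if_neg hx, if_neg hy]; rfl

theorem kOf_null (c : Limits.Cone F) {x y z : c.pt.carrier}
    (h : c.pt.str.null x y z) : nullK (kOf F c x) (kOf F c y) (kOf F c z) := by
  have hp := c.pt.isPasture
  have hT : ∀ {w : c.pt.carrier}, w ≠ c.pt.str.zero → kOf F c w = true := by
    intro w hw; unfold kOf; rw [if_neg hw]
  have hF : ∀ {w : c.pt.carrier}, w = c.pt.str.zero → kOf F c w = false := by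
    intro w hw; unfold kOf; rw [if_pos hw]
  by_cases hx : x = c.pt.str.zero <;> by_cases hy : y = c.pt.str.zero <;>
    by_cases hz : z = c.pt.str.zero
  · rw [hF hx, hF hy, hF hz]; exact Or.inl rfl
  · exact absurd (null_two_zero hp
      (hp.null_swap_left _ _ _ (hp.null_swap_right _ _ _ h)) hx hy) hz
  · exact absurd (null_two_zero hp (hp.null_swap_left _ _ _ h) hx hz) hy
  · rw [hF hx, hT hy, hT hz]; exact Or.inr rfl
  · exact absurd (null_two_zero hp h hy hz) hx
  · rw [hT hx, hF hy, hT hz]; exact Or.inr rfl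
  · rw [hT hx, hT hy, hF hz]; exact Or.inr rfl
  · rw [hT hx, hT hy, hT hz]; exact Or.inr rfl

noncomputable def liftHom (c : Limits.Cone F) : c.pt ⟶ limPasture F where
  toFun x := ⟨(kOf F c x, fun j => (c.π.app j).toFun x),
    fun {j j'} f => congrFun (congrArg PastureHom.toFun (c.w f)) x,
    fun j => by rw [app_zero_iff, kOf_eq_false_iff]⟩
  isHom :=
    { map_mul := fun a b => Sec.ext F (kOf_mul F c a b)
        (fun j => (c.π.app j).isHom.map_mul a b)
      map_zero := Sec.ext F ((kOf_eq_false_iff F c _).2 rfl) (fun j => (c.π.app j).isHom.map_zero)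
      map_one := Sec.ext F
        (show kOf F c c.pt.str.one = true by
          unfold kOf; rw [if_neg c.pt.isPasture.one_ne_zero])
        (fun j => (c.π.app j).isHom.map_one)
      map_neg := fun a => Sec.ext F
        (show kOf F c (c.pt.str.neg a) = kOf F c a by
          unfold kOf
          by_cases ha : a = c.pt.str.zero
          · rw [if_pos (by rw [ha]; exact c.pt.isPasture.neg_zero), if_pos ha]
          · rw [if_neg (fun h => ha ((neg_eq_zero_iff c.pt.isPasture a).1 h)), if_neg ha])
        (fun j => (c.π.app j).isHom.map_neg a)
      map_null := fun a b cc h => ⟨kOf_null F c h,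
        fun j => (c.π.app j).isHom.map_null _ _ _ h⟩ }

noncomputable def limIsLimit : Limits.IsLimit (limCone F) where
  lift := liftHom F
  fac c j := PastureHom.ext' rfl
  uniq c m hm := by
    apply PastureHom.ext'
    funext x
    apply Sec.ext F
    · -- Bool components agree
      show (m.toFun x).1.1 = kOf F c x
      have h1 : (m.toFun x).1.1 = false ↔ x = c.pt.str.zero := by
        rw [← eq_zero_iff F (m.toFun x)]
        exact hom_zero_iff c.pt.isPasture (limIsPasture F) m.isHom x
      have h2 := kOf_eq_false_iff F c x
      cases hA : (m.toFun x).1.1 <;> cases hB : kOf F c x <;> simp_all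
    · intro j
      exact congrFun (congrArg PastureHom.toFun (hm j)) x

end Lim

end PastureLimits

/-- **The category of pastures has all small limits**: every functor from a
small category `J` into the category of pastures has a limit. -/
theorem pastures_have_small_limits (J : Type v) [CategoryTheory.SmallCategory J]
    (F : CategoryTheory.Functor J Pasture.{max u v}) :
    CategoryTheory.Limits.HasLimit F := by
  exact CategoryTheory.Limits.HasLimit.mk
    ⟨PastureLimits.limCone F, PastureLimits.limIsLimit F⟩
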